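/- arXiv:1104.0576 — 3 statements merged into one kernel-verified Lean document; each statement's English description precedes it below -/
import Mathlib

section
/- The probability mass function of a Poisson binomial distribution is unimodal: there exists an integer m* with 0 ≤ m* ≤ m such that P(ε) ≤ P(ε+1) for all 0 ≤ ε < m* and P(ε) ≥ P(ε+1) for all m* ≤ ε < m. -/
/-- The Poisson binomial probability mass function: probability that exactly `ε`
of the independent Bernoulli indicators with success probabilities `h i` equal one. -/
def poissonBinomialPMF (m : ℕ) (h : Fin m → ℝ) (ε : ℕ) : ℝ :=
  ∑ S ∈ Finset.powersetCard ε (Finset.univ : Finset (Fin m)),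
    (∏ i ∈ S, h i) * ∏ i ∈ Sᶜ, (1 - h i)

namespace PBaux

open Finset

variable {ι : Type*} [DecidableEq ι]

noncomputable def pmfAux (s : Finset ι) (h : ι → ℝ) (ε : ℕ) : ℝ :=
  ∑ S ∈ s.powersetCard ε, (∏ i ∈ S, h i) * ∏ i ∈ s \ S, (1 - h i)

def shift (f : ℕ → ℝ) : ℕ → ℝ
  | 0 => 0
  | n + 1 => f n

def SLC (f : ℕ → ℝ) : Prop := ∀ k l, k < l → f k * f (l+1) ≤ f (k+1) * f l

lemma pmfAux_nonneg {s : Finset ι} {h : ι → ℝ} (hh : ∀ i ∈ s, 0 ≤ h i ∧ h i ≤ 1)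
    (ε : ℕ) : 0 ≤ pmfAux s h ε := by
  apply Finset.sum_nonneg
  intro S hS
  rw [mem_powersetCard] at hS
  apply mul_nonneg
  · exact Finset.prod_nonneg fun i hi => (hh i (hS.1 hi)).1
  · exact Finset.prod_nonneg fun i hi => by
      have := (hh i (mem_sdiff.mp hi).1).2; linarith

lemma pmfAux_empty (h : ι → ℝ) : pmfAux (∅ : Finset ι) h 0 = 1 := by
  simp [pmfAux]

lemma pmfAux_zero_of_lt {s : Finset ι} {h : ι → ℝ} {ε : ℕ} (hε : s.card < ε) :
    pmfAux s h ε = 0 := by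
  rw [pmfAux, Finset.powersetCard_eq_empty.mpr hε, Finset.sum_empty]

lemma pmfAux_insert {s : Finset ι} {a : ι} (ha : a ∉ s) (h : ι → ℝ) (ε : ℕ) :
    pmfAux (insert a s) h ε
      = (1 - h a) * pmfAux s h ε + h a * shift (pmfAux s h) ε := by
  cases ε with
  | zero =>
      simp only [shift, mul_zero, add_zero, pmfAux, powersetCard_zero]
      simp only [Finset.sum_singleton, Finset.prod_empty, one_mul, Finset.sdiff_empty]
      rw [Finset.prod_insert ha]
  | succ n =>
      rw [pmfAux, powersetCard_succ_insert ha]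
      rw [Finset.sum_union]
      · congr 1
        · rw [pmfAux, Finset.mul_sum]
          apply Finset.sum_congr rfl
          intro S hS
          rw [mem_powersetCard] at hS
          have haS : a ∉ S := fun hx => ha (hS.1 hx)
          have : insert a s \ S = insert a (s \ S) := by
            rw [insert_sdiff_of_notMem _ haS]
          rw [this, Finset.prod_insert (by simp [ha])]
          ring
        · show _ = h a * pmfAux s h n
          rw [pmfAux, Finset.mul_sum]
          rw [Finset.sum_image]
          · apply Finset.sum_congr rfl
            intro S hS
            rw [mem_powersetCard] at hS
            have haS : a ∉ S := fun hx => ha (hS.1 hx)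
            have h1 : insert a s \ insert a S = s \ S := by
              ext x
              simp only [mem_sdiff, mem_insert, not_or]
              constructor
              · rintro ⟨hx1 | hx2, hx3, hx4⟩
                · exact absurd hx1 hx3
                · exact ⟨hx2, hx4⟩
              · rintro ⟨hx1, hx2⟩
                exact ⟨Or.inr hx1, fun hxa => ha (hxa ▸ hx1), hx2⟩
            rw [h1, Finset.prod_insert haS]
            ring
          · intro S hS T hT hST
            rw [Finset.mem_coe, mem_powersetCard] at hS hT
            have : ∀ U : Finset ι, U ⊆ s → insert a U \ {a} = U := by
              intro U hU
              rw [insert_sdiff_of_mem _ (mem_singleton_self a),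
                  sdiff_singleton_eq_erase, erase_eq_of_notMem fun hx => ha (hU hx)]
            rw [← this S hS.1, ← this T hT.1, hST]
      · rw [Finset.disjoint_left]
        intro S hS hS'
        rw [mem_powersetCard] at hS
        rw [Finset.mem_image] at hS'
        obtain ⟨T, _, rfl⟩ := hS'
        exact ha (hS.1 (mem_insert_self a T))

lemma conv_slc {f : ℕ → ℝ} (hf : ∀ n, 0 ≤ f n) (hs : SLC f)
    {p : ℝ} (hp : 0 ≤ p) (hp1 : p ≤ 1) :
    SLC (fun n => (1 - p) * f n + p * shift f n) := by
  intro k l hkl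
  have hq : (0:ℝ) ≤ 1 - p := by linarith
  obtain ⟨l', rfl⟩ : ∃ l', l = l' + 1 :=
    ⟨l - 1, (Nat.succ_pred_eq_of_pos (Nat.pos_of_ne_zero (by omega))).symm⟩
  cases k with
  | zero =>
      simp only [shift]
      have A := hs 0 (l'+1) hkl
      have h1 : 0 ≤ ((1-p)*p) * (f 1 * f l') :=
        mul_nonneg (mul_nonneg hq hp) (mul_nonneg (hf 1) (hf l'))
      have h2 : 0 ≤ (p*p) * (f 0 * f l') :=
        mul_nonneg (mul_nonneg hp hp) (mul_nonneg (hf 0) (hf l'))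
      have A' := mul_le_mul_of_nonneg_left A (mul_nonneg hq hq)
      nlinarith [A', h1, h2]
  | succ k' =>
      simp only [shift]
      have hkl' : k' < l' + 1 := Nat.lt_of_succ_lt hkl
      have A := hs (k'+1) (l'+1) hkl
      have B := hs k' l' (by omega)
      have C : f k' * f (l' + 1 + 1) ≤ f (k' + 1 + 1) * f l' := by
        have C1 := hs k' (l'+1) hkl'
        rcases Nat.lt_or_ge (k'+1) l' with hlt | hge
        · have C2 := hs (k'+1) l' hlt
          calc f k' * f (l' + 1 + 1) ≤ f (k'+1) * f (l'+1) := C1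
            _ ≤ f (k'+1+1) * f l' := C2
        · have : k' + 1 = l' := by omega
          subst this
          calc f k' * f (k' + 1 + 1 + 1) ≤ f (k'+1) * f (k'+1+1) := C1
            _ = f (k'+1+1) * f (k'+1) := by ring
      have A' := mul_le_mul_of_nonneg_left A (mul_nonneg hq hq)
      have B' := mul_le_mul_of_nonneg_left B (mul_nonneg hp hp)
      have C' := mul_le_mul_of_nonneg_left C (mul_nonneg hp hq)
      nlinarith [A', B', C']

lemma slc_interval {f : ℕ → ℝ} (hf : ∀ n, 0 ≤ f n) (hs : SLC f) :
    ∀ d a b, 0 < f a → 0 < f (a + d) → a ≤ b → b ≤ a + d → 0 < f b := by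
  intro d
  induction d with
  | zero =>
      intro a b ha _ hab hba
      have hba' : b = a := by omega
      rwa [hba']
  | succ n ih =>
      intro a b ha hc hab hba
      rcases eq_or_lt_of_le hab with rfl | hab'
      · exact ha
      have ha1 : 0 < f (a + 1) := by
        rcases Nat.lt_or_ge (a + 1) (a + n + 1) with hlt | hge
        · have hstep := hs a (a + n) (by omega)
          have h2 : 0 < f a * f (a + n + 1) := mul_pos ha hc
          have h3 : 0 < f (a+1) * f (a + n) := lt_of_lt_of_le h2 hstep
          rcases (mul_pos_iff.mp h3) with ⟨h4, _⟩ | ⟨h4, h5⟩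
          · exact h4
          · exact absurd h5 (not_lt.mpr (hf _))
        · have he : a + 1 = a + (n+1) := by omega
          rw [he]; exact hc
      have hc' : 0 < f (a + 1 + n) := by
        have he : a + 1 + n = a + (n+1) := by omega
        rw [he]; exact hc
      exact ih (a+1) b ha1 hc' hab' (by omega)

lemma pmfAux_slc (h : ι → ℝ) :
    ∀ s : Finset ι, (∀ i ∈ s, 0 ≤ h i ∧ h i ≤ 1) → SLC (pmfAux s h) := by
  intro s
  induction s using Finset.induction_on with
  | empty =>
      intro _ k l hkl
      have hz : pmfAux (∅ : Finset ι) h (l+1) = 0 :=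
        pmfAux_zero_of_lt (by simp)
      have h1 : 0 ≤ pmfAux (∅ : Finset ι) h (k+1) := pmfAux_nonneg (by simp) _
      have h2 : 0 ≤ pmfAux (∅ : Finset ι) h l := pmfAux_nonneg (by simp) _
      rw [hz, mul_zero]
      exact mul_nonneg h1 h2
  | @insert a s ha ih =>
      intro hh
      have hh' : ∀ i ∈ s, 0 ≤ h i ∧ h i ≤ 1 := fun i hi => hh i (mem_insert_of_mem hi)
      have hpa := hh a (mem_insert_self a s)
      have hfe : pmfAux (insert a s) h
          = fun ε => (1 - h a) * pmfAux s h ε + h a * shift (pmfAux s h) ε :=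
        funext (pmfAux_insert ha h)
      rw [hfe]
      exact conv_slc (pmfAux_nonneg hh') (ih hh') hpa.1 hpa.2

lemma pmfAux_exists_pos (h : ι → ℝ) :
    ∀ s : Finset ι, (∀ i ∈ s, 0 ≤ h i ∧ h i ≤ 1) →
      ∃ ε ≤ s.card, 0 < pmfAux s h ε := by
  intro s
  induction s using Finset.induction_on with
  | empty =>
      intro _
      exact ⟨0, le_refl _, by rw [pmfAux_empty]; norm_num⟩
  | @insert a s ha ih =>
      intro hh
      have hh' : ∀ i ∈ s, 0 ≤ h i ∧ h i ≤ 1 := fun i hi => hh i (mem_insert_of_mem hi)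
      have hpa := hh a (mem_insert_self a s)
      obtain ⟨ε, hεc, hεpos⟩ := ih hh'
      rcases lt_or_eq_of_le hpa.2 with hlt | heq
      · refine ⟨ε, ?_, ?_⟩
        · rw [card_insert_of_notMem ha]; omega
        · rw [pmfAux_insert ha h]
          have hsh : 0 ≤ shift (pmfAux s h) ε := by
            cases ε with
            | zero => simp [shift]
            | succ n => exact pmfAux_nonneg hh' n
          nlinarith [hεpos, hpa.1]
      · refine ⟨ε + 1, ?_, ?_⟩
        · rw [card_insert_of_notMem ha]; omega
        · rw [pmfAux_insert ha h, heq]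
          simpa [shift] using hεpos

end PBaux

/-- The Poisson binomial probability mass function is unimodal. -/
theorem poissonBinomial_unimodal (m : ℕ) (hm : 1 ≤ m) (h : Fin m → ℝ)
    (hh : ∀ i, 0 ≤ h i ∧ h i ≤ 1) :
    ∃ mstar : ℕ, mstar ≤ m ∧
      (∀ ε : ℕ, ε < mstar →
        poissonBinomialPMF m h ε ≤ poissonBinomialPMF m h (ε + 1)) ∧
      (∀ ε : ℕ, mstar ≤ ε → ε < m →
        poissonBinomialPMF m h ε ≥ poissonBinomialPMF m h (ε + 1)) := by
  classical
  set f : ℕ → ℝ := poissonBinomialPMF m h with hfdef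
  have hfeq : ∀ ε, f ε = PBaux.pmfAux (Finset.univ : Finset (Fin m)) h ε := by
    intro ε
    simp only [hfdef, poissonBinomialPMF, PBaux.pmfAux, Finset.compl_eq_univ_sdiff]
  have hcard : (Finset.univ : Finset (Fin m)).card = m := by simp
  have hhuniv : ∀ i ∈ (Finset.univ : Finset (Fin m)), 0 ≤ h i ∧ h i ≤ 1 :=
    fun i _ => hh i
  have hf0 : ∀ n, 0 ≤ f n := by
    intro n; rw [hfeq]; exact PBaux.pmfAux_nonneg hhuniv n
  have hslc : PBaux.SLC f := by
    have := PBaux.pmfAux_slc h Finset.univ hhuniv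
    intro k l hkl
    rw [hfeq, hfeq, hfeq, hfeq]
    exact this k l hkl
  have hztop : ∀ ε, m < ε → f ε = 0 := by
    intro ε hε
    rw [hfeq]
    exact PBaux.pmfAux_zero_of_lt (by rwa [hcard])
  obtain ⟨ε0, hε0c, hε0pos⟩ := PBaux.pmfAux_exists_pos h Finset.univ hhuniv
  have hε0m : ε0 ≤ m := by rwa [hcard] at hε0c
  have hε0pos' : 0 < f ε0 := by rw [hfeq]; exact hε0pos
  obtain ⟨mstar, hmem, hmax⟩ :=
    Finset.exists_max_image (Finset.range (m+1)) f ⟨0, by simp⟩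
  have hmstar_le : mstar ≤ m := by
    have := Finset.mem_range.mp hmem; omega
  have hmax' : ∀ k, k ≤ m → f k ≤ f mstar := by
    intro k hk
    exact hmax k (Finset.mem_range.mpr (by omega))
  have hpos : 0 < f mstar := lt_of_lt_of_le hε0pos' (hmax' ε0 hε0m)
  have hint : ∀ a b c : ℕ, 0 < f a → 0 < f c → a ≤ b → b ≤ c → 0 < f b := by
    intro a b c ha hc hab hbc
    have hac : a ≤ c := le_trans hab hbc
    refine PBaux.slc_interval hf0 hslc (c - a) a b ha ?_ hab (by omega)
    have : a + (c - a) = c := by omega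
    rw [this]; exact hc
  have hdec : ∀ ε, mstar ≤ ε → f (ε + 1) ≤ f ε := by
    intro ε hε
    induction ε, hε using Nat.le_induction with
    | base =>
        rcases Nat.lt_or_ge m (mstar + 1) with hlt | hge
        · rw [hztop _ hlt]; exact hf0 _
        · exact hmax' _ hge
    | succ n hn ih =>
        by_cases hpos1 : 0 < f (n+1)
        · have hA := hslc n (n+1) (Nat.lt_succ_self n)
          have h2 : f (n+1) * f (n+2) ≤ f n * f (n+2) :=
            mul_le_mul_of_nonneg_right ih (hf0 _)
          nlinarith [hA, h2, hpos1]
        · have h1 : f (n+1) = 0 := le_antisymm (not_lt.mp hpos1) (hf0 _)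
          have h2 : f (n+2) = 0 := by
            by_contra hne
            have : 0 < f (n+2) := lt_of_le_of_ne (hf0 _) (Ne.symm hne)
            have := hint mstar (n+1) (n+2) hpos this (by omega) (by omega)
            exact hpos1 this
          rw [h1, h2]
  have hinc : ∀ d ε, ε + d = mstar → ε < mstar → f ε ≤ f (ε + 1) := by
    intro d
    induction d with
    | zero => intro ε heq hlt; omega
    | succ n ih =>
        intro ε heq hlt
        cases n with
        | zero =>
            have : ε + 1 = mstar := by omega
            rw [this]
            exact hmax' ε (by omega)
        | succ n' =>
            have ih' : f (ε + 1) ≤ f (ε + 2) := ih (ε + 1) (by omega) (by omega)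
            by_cases hpos1 : 0 < f (ε+1)
            · have hA := hslc ε (ε+1) (Nat.lt_succ_self ε)
              have h2 : f ε * f (ε+1) ≤ f ε * f (ε+2) :=
                mul_le_mul_of_nonneg_left ih' (hf0 _)
              nlinarith [hA, h2, hpos1]
            · have h1 : f (ε+1) = 0 := le_antisymm (not_lt.mp hpos1) (hf0 _)
              have h2 : f ε = 0 := by
                by_contra hne
                have hfε : 0 < f ε := lt_of_le_of_ne (hf0 _) (Ne.symm hne)
                have := hint ε (ε+1) mstar hfε hpos (by omega) (by omega)
                exact hpos1 this
              rw [h1, h2]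
  exact ⟨mstar, hmstar_le,
    fun ε hε => hinc (mstar - ε) ε (by omega) hε,
    fun ε h1 _ => hdec ε h1⟩
end

section
/- The mode of a Poisson binomial distribution is determined by its expectation: there exists an integer m* with 0 ≤ m* ≤ m maximizing P (i.e., P(m*) ≥ P(ε) for all 0 ≤ ε ≤ m) such that |m* − μ| ≤ 1, where μ = h_0 + h_1 + ⋯ + h_{m−1}. -/
open Finset

noncomputable def pmfZ (m : ℕ) (h : Fin m → ℝ) (s : Finset (Fin m)) (k : ℤ) : ℝ :=
  if 0 ≤ k then
    ∑ S ∈ Finset.powersetCard k.toNat s, (∏ i ∈ S, h i) * ∏ i ∈ s \ S, (1 - h i)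
  else 0

lemma pmfZ_neg {m : ℕ} {h : Fin m → ℝ} {s : Finset (Fin m)} {k : ℤ} (hk : k < 0) :
    pmfZ m h s k = 0 := by
  simp [pmfZ, not_le.2 hk]

lemma peel_aux {m : ℕ} (h : Fin m → ℝ) (i : Fin m) (t : Finset (Fin m)) (hit : i ∉ t) (n : ℕ) :
    ∑ S ∈ powersetCard (n+1) (insert i t), (∏ j ∈ S, h j) * ∏ j ∈ (insert i t) \ S, (1 - h j)
    = (1 - h i) * ∑ S ∈ powersetCard (n+1) t, (∏ j ∈ S, h j) * ∏ j ∈ t \ S, (1 - h j)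
      + h i * ∑ S ∈ powersetCard n t, (∏ j ∈ S, h j) * ∏ j ∈ t \ S, (1 - h j) := by
  rw [powersetCard_succ_insert hit]
  have hdisj : Disjoint (powersetCard (n+1) t) ((powersetCard n t).image (insert i)) := by
    rw [Finset.disjoint_left]
    intro S hS hS'
    obtain ⟨T, hT, rfl⟩ := Finset.mem_image.1 hS'
    exact hit ((Finset.mem_powersetCard.1 hS).1 (Finset.mem_insert_self i T))
  rw [Finset.sum_union hdisj]
  congr 1
  · rw [Finset.mul_sum]
    apply Finset.sum_congr rfl
    intro S hS
    have hSt := (Finset.mem_powersetCard.1 hS).1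
    have hiS : i ∉ S := fun hc => hit (hSt hc)
    have h1 : (insert i t) \ S = insert i (t \ S) := Finset.insert_sdiff_of_notMem _ hiS
    have h2 : i ∉ t \ S := fun hc => hit (Finset.mem_sdiff.1 hc).1
    rw [h1, Finset.prod_insert h2]
    ring
  · rw [Finset.sum_image ?inj]
    case inj =>
      intro S hS S' hS' heq
      have hiS : i ∉ S := fun hc => hit ((Finset.mem_powersetCard.1 hS).1 hc)
      have hiS' : i ∉ S' := fun hc => hit ((Finset.mem_powersetCard.1 hS').1 hc)
      rw [← Finset.erase_insert hiS, heq, Finset.erase_insert hiS']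
    rw [Finset.mul_sum]
    apply Finset.sum_congr rfl
    intro S hS
    have hSt := (Finset.mem_powersetCard.1 hS).1
    have hiS : i ∉ S := fun hc => hit (hSt hc)
    have h1 : (insert i t) \ (insert i S) = t \ S := by
      ext x
      simp only [Finset.mem_sdiff, Finset.mem_insert]
      constructor
      · rintro ⟨hx1 | hx1, hx2⟩
        · exact absurd (Or.inl hx1) hx2
        · exact ⟨hx1, fun hc => hx2 (Or.inr hc)⟩
      · rintro ⟨hx1, hx2⟩
        exact ⟨Or.inr hx1, fun hc => by rcases hc with rfl | hc; exact hit hx1; exact hx2 hc⟩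
    rw [h1, Finset.prod_insert hiS]
    ring

lemma pmfZ_peel {m : ℕ} {h : Fin m → ℝ} {s : Finset (Fin m)} {i : Fin m} (hi : i ∈ s) (k : ℤ) :
    pmfZ m h s k = (1 - h i) * pmfZ m h (s.erase i) k + h i * pmfZ m h (s.erase i) (k - 1) := by
  have hins : s = insert i (s.erase i) := (Finset.insert_erase hi).symm
  have hit : i ∉ s.erase i := Finset.notMem_erase i s
  rcases lt_trichotomy k 0 with hk | hk | hk
  · rw [pmfZ_neg hk, pmfZ_neg hk, pmfZ_neg (by linarith)]; ring
  · subst hk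
    rw [pmfZ_neg (show (0:ℤ)-1 < 0 by norm_num), mul_zero, add_zero]
    simp only [pmfZ, if_pos (le_refl (0:ℤ)), Int.toNat_zero, Finset.powersetCard_zero,
      Finset.sum_singleton, Finset.prod_empty, one_mul, Finset.sdiff_empty]
    conv_lhs => rw [hins]
    rw [Finset.prod_insert hit]
  · have h1 : (0:ℤ) ≤ k := le_of_lt hk
    have h2 : (0:ℤ) ≤ k - 1 := by omega
    have h3 : k.toNat = (k-1).toNat + 1 := by omega
    simp only [pmfZ, if_pos h1, if_pos h2, h3]
    conv_lhs => rw [hins]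
    exact peel_aux h i (s.erase i) hit (k-1).toNat

lemma pmfZ_congr {m : ℕ} {h h' : Fin m → ℝ} {s : Finset (Fin m)} (k : ℤ)
    (he : ∀ i ∈ s, h i = h' i) : pmfZ m h s k = pmfZ m h' s k := by
  unfold pmfZ
  split
  · apply Finset.sum_congr rfl
    intro S hS
    rw [Finset.mem_powersetCard] at hS
    congr 1
    · exact Finset.prod_congr rfl fun i hi => he i (hS.1 hi)
    · exact Finset.prod_congr rfl fun i hi => by rw [he i (Finset.mem_sdiff.1 hi).1]
  · rfl

lemma pmfZ_nonneg {m : ℕ} {h : Fin m → ℝ} {s : Finset (Fin m)} (k : ℤ)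
    (hh : ∀ i ∈ s, 0 ≤ h i ∧ h i ≤ 1) : 0 ≤ pmfZ m h s k := by
  unfold pmfZ
  split
  · apply Finset.sum_nonneg
    intro S hS
    rw [Finset.mem_powersetCard] at hS
    apply mul_nonneg
    · exact Finset.prod_nonneg fun i hi => (hh i (hS.1 hi)).1
    · exact Finset.prod_nonneg fun i hi => by
        have := (hh i (Finset.mem_sdiff.1 hi).1).2; linarith
  · exact le_refl 0

lemma pmfZ_pair {m : ℕ} (h : Fin m → ℝ) {i j : Fin m} (hij : i ≠ j) (k : ℤ) :
    ∃ c₀ c₁ d : ℝ, ∀ x y : ℝ,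
      pmfZ m (Function.update (Function.update h i x) j y) Finset.univ k
        = c₀ + c₁ * (x + y) + d * (x * y) := by
  classical
  set t := (Finset.univ.erase i).erase j with ht
  refine ⟨pmfZ m h t k, pmfZ m h t (k-1) - pmfZ m h t k,
    pmfZ m h t k - 2 * pmfZ m h t (k-1) + pmfZ m h t (k-2), ?_⟩
  intro x y
  set h' := Function.update (Function.update h i x) j y with hh'
  have hji : j ∈ Finset.univ.erase i := Finset.mem_erase.2 ⟨hij.symm, Finset.mem_univ j⟩
  have hcg : ∀ l : ℤ, pmfZ m h' t l = pmfZ m h t l := by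
    intro l
    apply pmfZ_congr
    intro a ha
    rw [ht, Finset.mem_erase, Finset.mem_erase] at ha
    rw [hh', Function.update_of_ne ha.1, Function.update_of_ne ha.2.1]
  have hx : h' i = x := by rw [hh', Function.update_of_ne hij, Function.update_self]
  have hy : h' j = y := by rw [hh', Function.update_self]
  rw [pmfZ_peel (Finset.mem_univ i) k, pmfZ_peel hji k, pmfZ_peel hji (k-1)]
  rw [hx, hy]
  have e1 : (Finset.univ.erase i).erase j = t := rfl
  rw [e1, hcg, hcg, hcg]
  have e2 : k - 1 - 1 = k - 2 := by ring
  rw [e2]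
  ring

noncomputable def myC (n : ℕ) (t : ℤ) : ℝ :=
  if 0 ≤ t ∧ t ≤ n then (n.choose t.toNat : ℝ) else 0

lemma myC_nonneg (n : ℕ) (t : ℤ) : 0 ≤ myC n t := by
  unfold myC; split <;> positivity

lemma myC_neg {n : ℕ} {t : ℤ} (ht : t < 0) : myC n t = 0 := by
  unfold myC; rw [if_neg]; rintro ⟨h1, h2⟩; omega

lemma myC_big {n : ℕ} {t : ℤ} (ht : (n:ℤ) < t) : myC n t = 0 := by
  unfold myC; rw [if_neg]; rintro ⟨h1, h2⟩; omega

lemma myC_in {n : ℕ} {t : ℤ} (h0 : 0 ≤ t) (h1 : t ≤ n) : myC n t = (n.choose t.toNat : ℝ) := by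
  unfold myC; rw [if_pos ⟨h0, h1⟩]

lemma myC_pascal (n : ℕ) (t : ℤ) : myC (n+1) t = myC n t + myC n (t-1) := by
  rcases lt_trichotomy t 0 with ht | ht | ht
  · rw [myC_neg ht, myC_neg ht, myC_neg (show t-1 < 0 by omega)]; ring
  · subst ht
    rw [myC_neg (show (0:ℤ)-1 < 0 by norm_num)]
    unfold myC
    rw [if_pos ⟨le_refl (0:ℤ), by omega⟩, if_pos ⟨le_refl (0:ℤ), by omega⟩]
    simp
  · rcases le_or_gt t n with ht2 | ht2
    · unfold myC
      rw [if_pos ⟨by omega, by omega⟩, if_pos ⟨by omega, by omega⟩, if_pos ⟨by omega, by omega⟩]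
      have h1 : t.toNat = (t-1).toNat + 1 := by omega
      rw [h1, Nat.choose_succ_succ']
      push_cast
      ring
    · rcases le_or_gt t (n+1) with ht3 | ht3
      · have htn : t = (n:ℤ)+1 := by omega
        subst htn
        have e0 : myC n ((n:ℤ)+1) = 0 := myC_big (by omega)
        have e1 : myC (n+1) ((n:ℤ)+1) = 1 := by
          unfold myC
          rw [if_pos ⟨by omega, by push_cast; omega⟩]
          have hh : ((n:ℤ)+1).toNat = n+1 := by omega
          rw [hh, Nat.choose_self]
          norm_num
        have e2 : myC n ((n:ℤ)+1-1) = 1 := by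
          unfold myC
          rw [if_pos ⟨by omega, by omega⟩]
          have hh : ((n:ℤ)+1-1).toNat = n := by omega
          rw [hh, Nat.choose_self]
          norm_num
        rw [e0, e1, e2]; ring
      · rw [myC_big (show (n:ℤ)+1 < t by push_cast; omega), myC_big (show (n:ℤ) < t by omega),
          myC_big (show (n:ℤ) < t-1 by omega)]; ring

lemma pascal_step (v : ℕ) (T : ℤ) (x : ℝ) :
    (1-x) * (myC v T * x^T.toNat * (1-x)^((v:ℤ)-T).toNat)
      + x * (myC v (T-1) * x^(T-1).toNat * (1-x)^((v:ℤ)-(T-1)).toNat)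
    = myC (v+1) T * x^T.toNat * (1-x)^((v:ℤ)+1-T).toNat := by
  rw [myC_pascal]
  rcases lt_trichotomy T 0 with hT | hT | hT
  · rw [myC_neg hT, myC_neg (by omega)]; ring
  · subst hT
    rw [myC_neg (show (0:ℤ)-1 < 0 by norm_num)]
    have h1 : ((v:ℤ) - 0).toNat = v := by omega
    have h2 : ((v:ℤ) + 1 - 0).toNat = v + 1 := by omega
    rw [h1, h2, pow_succ]
    ring
  · have hx2 : x^T.toNat = x * x^(T-1).toNat := by
      have : T.toNat = (T-1).toNat + 1 := by omega
      rw [this, pow_succ]; ring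
    have he : ((v:ℤ) - (T-1)).toNat = ((v:ℤ) + 1 - T).toNat := by omega
    rcases le_or_gt T v with hTv | hTv
    · have hv : ((v:ℤ) + 1 - T).toNat = ((v:ℤ) - T).toNat + 1 := by omega
      rw [he, hv, pow_succ, hx2]
      ring
    · rw [myC_big hTv, he, hx2]
      ring

lemma pmfZ_empty {m : ℕ} (h : Fin m → ℝ) (k : ℤ) :
    pmfZ m h ∅ k = if k = 0 then 1 else 0 := by
  unfold pmfZ
  rcases lt_trichotomy k 0 with hk | hk | hk
  · rw [if_neg (not_le.2 hk), if_neg (by omega)]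
  · subst hk
    norm_num
  · rw [if_pos (le_of_lt hk), if_neg (by omega)]
    rw [Finset.powersetCard_eq_empty.2 (by simp; omega), Finset.sum_empty]

lemma config_formula {m : ℕ} (h : Fin m → ℝ) (x : ℝ) (hx0 : 0 < x) (hx1 : x < 1)
    (s : Finset (Fin m)) (hcfg : ∀ i ∈ s, h i = 1 ∨ h i = 0 ∨ h i = x) :
    (∀ k : ℤ, pmfZ m h s k
      = myC ((s.filter (fun i => h i = x)).card)
          (k - ((s.filter (fun i => h i = 1)).card : ℤ))
        * x^((k - ((s.filter (fun i => h i = 1)).card : ℤ)).toNat)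
        * (1-x)^((((s.filter (fun i => h i = x)).card : ℤ)
            - (k - ((s.filter (fun i => h i = 1)).card : ℤ))).toNat))
    ∧ ∑ i ∈ s, h i = ((s.filter (fun i => h i = 1)).card : ℝ)
        + ((s.filter (fun i => h i = x)).card : ℝ) * x := by
  classical
  induction s using Finset.induction_on with
  | empty =>
    constructor
    · intro k
      rw [pmfZ_empty]
      simp only [Finset.filter_empty, Finset.card_empty, Nat.cast_zero]
      rcases lt_trichotomy k 0 with hk | hk | hk
      · rw [if_neg (by omega), myC_neg (by omega : k - 0 < 0)]
        ring
      · subst hk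
        norm_num [myC]
      · rw [if_neg (by omega), myC_big (by omega : (0:ℤ) < k - 0)]
        ring
    · simp
  | insert a s ha ih =>
    have hcfg' : ∀ i ∈ s, h i = 1 ∨ h i = 0 ∨ h i = x :=
      fun i hi => hcfg i (Finset.mem_insert_of_mem hi)
    obtain ⟨ihp, ihs⟩ := ih hcfg'
    have hpeel : ∀ k : ℤ, pmfZ m h (insert a s) k
        = (1 - h a) * pmfZ m h s k + h a * pmfZ m h s (k-1) := by
      intro k
      rw [pmfZ_peel (Finset.mem_insert_self a s) k, Finset.erase_insert ha]
    have hnf1 : a ∉ s.filter (fun i => h i = 1) := fun hc => ha (Finset.mem_filter.1 hc).1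
    have hnfx : a ∉ s.filter (fun i => h i = x) := fun hc => ha (Finset.mem_filter.1 hc).1
    rcases hcfg a (Finset.mem_insert_self a s) with h1 | h0 | hx
    · -- h a = 1
      have e1 : (insert a s).filter (fun i => h i = 1) = insert a (s.filter (fun i => h i = 1)) := by
        rw [Finset.filter_insert, if_pos h1]
      have ex : (insert a s).filter (fun i => h i = x) = s.filter (fun i => h i = x) := by
        rw [Finset.filter_insert, if_neg (by rw [h1]; intro hc; linarith)]
      rw [e1, ex, Finset.card_insert_of_notMem hnf1]
      constructor
      · intro k
        rw [hpeel k, h1, ihp (k-1)]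
        push_cast
        have e : k - 1 - ((s.filter (fun i => h i = 1)).card : ℤ)
            = k - (((s.filter (fun i => h i = 1)).card : ℤ) + 1) := by ring
        rw [e]
        ring
      · rw [Finset.sum_insert ha, ihs, h1]
        push_cast
        ring
    · -- h a = 0
      have e1 : (insert a s).filter (fun i => h i = 1) = s.filter (fun i => h i = 1) := by
        rw [Finset.filter_insert, if_neg (by rw [h0]; norm_num)]
      have ex : (insert a s).filter (fun i => h i = x) = s.filter (fun i => h i = x) := by
        rw [Finset.filter_insert, if_neg (by rw [h0]; intro hc; linarith)]
      rw [e1, ex]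
      constructor
      · intro k
        rw [hpeel k, h0, ihp k]
        ring
      · rw [Finset.sum_insert ha, ihs, h0]
        ring
    · -- h a = x
      have e1 : (insert a s).filter (fun i => h i = 1) = s.filter (fun i => h i = 1) := by
        rw [Finset.filter_insert, if_neg (by rw [hx]; intro hc; linarith)]
      have ex : (insert a s).filter (fun i => h i = x) = insert a (s.filter (fun i => h i = x)) := by
        rw [Finset.filter_insert, if_pos hx]
      rw [e1, ex, Finset.card_insert_of_notMem hnfx]
      constructor
      · intro k
        rw [hpeel k, hx, ihp k, ihp (k-1)]
        have e : k - 1 - ((s.filter (fun i => h i = 1)).card : ℤ)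
            = k - ((s.filter (fun i => h i = 1)).card : ℤ) - 1 := by ring
        rw [e]
        have := pascal_step ((s.filter (fun i => h i = x)).card)
          (k - ((s.filter (fun i => h i = 1)).card : ℤ)) x
        push_cast
        push_cast at this
        linarith [this]
      · rw [Finset.sum_insert ha, ihs, hx]
        push_cast
        ring

lemma binom_W {v u : ℕ} {k : ℤ} {x : ℝ} (hx0 : 0 < x) (hx1 : x < 1)
    (hμ : (k:ℝ) + 1 ≤ (u:ℝ) + (v:ℝ) * x) :
    myC v (k - (u:ℤ)) * x^((k - (u:ℤ)).toNat) * (1-x)^(((v:ℤ) - (k - (u:ℤ))).toNat)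
    ≤ myC v (k+1 - (u:ℤ)) * x^((k+1 - (u:ℤ)).toNat) * (1-x)^(((v:ℤ) - (k+1 - (u:ℤ))).toNat) := by
  have h1x : (0:ℝ) ≤ 1 - x := by linarith
  rcases lt_or_ge (k - (u:ℤ)) 0 with hT | hT
  · rw [myC_neg hT]
    have := myC_nonneg v (k+1-(u:ℤ))
    have : (0:ℝ) ≤ myC v (k+1 - (u:ℤ)) * x^((k+1 - (u:ℤ)).toNat) := by positivity
    nlinarith [pow_nonneg h1x (((v:ℤ) - (k+1 - (u:ℤ))).toNat)]
  · rcases le_or_gt (v:ℤ) (k - (u:ℤ)) with hTv | hTv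
    · exfalso
      have hc : ((v:ℝ)) ≤ (k:ℝ) - (u:ℝ) := by exact_mod_cast hTv
      nlinarith [mul_le_of_le_one_right (Nat.cast_nonneg v : (0:ℝ) ≤ v) (le_of_lt hx1)]
    · -- in range
      set t : ℕ := (k - (u:ℤ)).toNat with htdef
      have htT : (t:ℤ) = k - (u:ℤ) := Int.toNat_of_nonneg hT
      have htv : t < v := by omega
      have hvx : (t:ℝ) + 1 ≤ (v:ℝ) * x := by
        have : ((t:ℤ):ℝ) = (k:ℝ) - (u:ℝ) := by exact_mod_cast congrArg (fun z : ℤ => (z:ℝ)) htT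
        push_cast at this
        linarith
      have e1 : myC v (k - (u:ℤ)) = (v.choose t : ℝ) := myC_in hT (by omega)
      have e2 : myC v (k+1 - (u:ℤ)) = (v.choose (t+1) : ℝ) := by
        have harg : (k+1-(u:ℤ)).toNat = t+1 := by omega
        rw [myC_in (by omega) (by omega), harg]
      have e3 : ((k:ℤ)+1 - (u:ℤ)).toNat = t + 1 := by omega
      have e4 : (((v:ℤ) - (k - (u:ℤ)))).toNat = (v - t - 1) + 1 := by omega
      have e5 : (((v:ℤ) - (k+1 - (u:ℤ)))).toNat = v - t - 1 := by omega
      rw [e1, e2, e3, e4, e5]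
      have hid : (v.choose (t+1) : ℝ) * ((t:ℝ)+1) = (v.choose t : ℝ) * ((v:ℝ) - (t:ℝ)) := by
        have h := Nat.choose_succ_right_eq v t
        have hcast := congrArg (fun n : ℕ => (n:ℝ)) h
        push_cast [Nat.cast_sub (le_of_lt htv)] at hcast
        linarith
      have hbr : ((t:ℝ)+1)*(1-x) ≤ ((v:ℝ)-(t:ℝ))*x := by nlinarith
      have hCn : (0:ℝ) ≤ (v.choose t : ℝ) := by positivity
      have h3 := mul_le_mul_of_nonneg_left hbr hCn
      have key : (v.choose t:ℝ)*(1-x) ≤ (v.choose (t+1):ℝ)*x := by nlinarith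
      have hXY : (0:ℝ) ≤ x^t * (1-x)^(v-t-1) := by positivity
      have h4 := mul_le_mul_of_nonneg_left key hXY
      rw [pow_succ, pow_succ]
      nlinarith [h4]

lemma binom_W' {v u : ℕ} {k : ℤ} {x : ℝ} (hx0 : 0 < x) (hx1 : x < 1)
    (hμ : (u:ℝ) + (v:ℝ) * x ≤ (k:ℝ)) :
    myC v (k+1 - (u:ℤ)) * x^((k+1 - (u:ℤ)).toNat) * (1-x)^(((v:ℤ) - (k+1 - (u:ℤ))).toNat)
    ≤ myC v (k - (u:ℤ)) * x^((k - (u:ℤ)).toNat) * (1-x)^(((v:ℤ) - (k - (u:ℤ))).toNat) := by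
  have h1x : (0:ℝ) ≤ 1 - x := by linarith
  rcases lt_or_ge (k - (u:ℤ)) 0 with hT | hT
  · exfalso
    have hc : (k:ℝ) < (u:ℝ) := by
      have : k < (u:ℤ) := by omega
      exact_mod_cast this
    nlinarith [mul_nonneg (Nat.cast_nonneg v : (0:ℝ) ≤ v) (le_of_lt hx0)]
  · rcases le_or_gt (v:ℤ) (k - (u:ℤ)) with hTv | hTv
    · rw [myC_big (by omega : (v:ℤ) < k+1-(u:ℤ))]
      have : (0:ℝ) ≤ myC v (k - (u:ℤ)) * x^((k - (u:ℤ)).toNat) :=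
        mul_nonneg (myC_nonneg _ _) (pow_nonneg (le_of_lt hx0) _)
      nlinarith [pow_nonneg h1x (((v:ℤ) - (k - (u:ℤ))).toNat)]
    · set t : ℕ := (k - (u:ℤ)).toNat with htdef
      have htT : (t:ℤ) = k - (u:ℤ) := Int.toNat_of_nonneg hT
      have htv : t < v := by omega
      have hvx : (v:ℝ) * x ≤ (t:ℝ) := by
        have : ((t:ℤ):ℝ) = (k:ℝ) - (u:ℝ) := by exact_mod_cast congrArg (fun z : ℤ => (z:ℝ)) htT
        push_cast at this
        linarith
      have e1 : myC v (k - (u:ℤ)) = (v.choose t : ℝ) := myC_in hT (by omega)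
      have e2 : myC v (k+1 - (u:ℤ)) = (v.choose (t+1) : ℝ) := by
        have harg : (k+1-(u:ℤ)).toNat = t+1 := by omega
        rw [myC_in (by omega) (by omega), harg]
      have e3 : ((k:ℤ)+1 - (u:ℤ)).toNat = t + 1 := by omega
      have e4 : (((v:ℤ) - (k - (u:ℤ)))).toNat = (v - t - 1) + 1 := by omega
      have e5 : (((v:ℤ) - (k+1 - (u:ℤ)))).toNat = v - t - 1 := by omega
      rw [e1, e2, e3, e4, e5]
      have hid : (v.choose (t+1) : ℝ) * ((t:ℝ)+1) = (v.choose t : ℝ) * ((v:ℝ) - (t:ℝ)) := by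
        have h := Nat.choose_succ_right_eq v t
        have hcast := congrArg (fun n : ℕ => (n:ℝ)) h
        push_cast [Nat.cast_sub (le_of_lt htv)] at hcast
        linarith
      have hbr : ((v:ℝ)-(t:ℝ))*x ≤ ((t:ℝ)+1)*(1-x) := by nlinarith
      have hCn : (0:ℝ) ≤ (v.choose t : ℝ) := by positivity
      have h3 := mul_le_mul_of_nonneg_left hbr hCn
      have key : (v.choose (t+1):ℝ)*x ≤ (v.choose t:ℝ)*(1-x) := by nlinarith
      have hXY : (0:ℝ) ≤ x^t * (1-x)^(v-t-1) := by positivity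
      have h4 := mul_le_mul_of_nonneg_left key hXY
      rw [pow_succ, pow_succ]
      nlinarith [h4]

lemma sum_split2 {m : ℕ} {i j : Fin m} (hij : i ≠ j) (g : Fin m → ℝ) :
    ∑ x, g x = g i + g j + ∑ x ∈ (Finset.univ.erase i).erase j, g x := by
  rw [← Finset.add_sum_erase _ g (Finset.mem_univ i),
      ← Finset.add_sum_erase _ g (Finset.mem_erase.2 ⟨hij.symm, Finset.mem_univ j⟩), add_assoc]

lemma gen_min (m : ℕ) (f : (Fin m → ℝ) → ℝ) (hf : Continuous f)
    (hpq : ∀ (h : Fin m → ℝ) (i j : Fin m), i ≠ j → ∃ c₀ c₁ d : ℝ, ∀ x y,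
        f (Function.update (Function.update h i x) j y) = c₀ + c₁ * (x+y) + d * (x*y))
    (μ₀ : ℝ)
    (hbase : ∀ h : Fin m → ℝ, (∀ i, 0 ≤ h i ∧ h i ≤ 1) → (∑ i, h i) = μ₀ →
        (∀ i j, 0 < h i → h i < 1 → 0 < h j → h j < 1 → h i = h j) → 0 ≤ f h)
    (h : Fin m → ℝ) (hcube : ∀ i, 0 ≤ h i ∧ h i ≤ 1) (hsum : (∑ i, h i) = μ₀) :
    0 ≤ f h := by
  classical
  set K : Set (Fin m → ℝ) :=
    (Set.pi Set.univ (fun _ : Fin m => Set.Icc (0:ℝ) 1)) ∩ {x | ∑ i, x i = μ₀} with hKdef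
  have hsumcont : Continuous fun x : Fin m → ℝ => ∑ i, x i :=
    continuous_finset_sum _ fun i _ => continuous_apply i
  have hKc : IsCompact K :=
    (isCompact_univ_pi fun _ => isCompact_Icc).inter_right
      (isClosed_eq hsumcont continuous_const)
  have hmemK : ∀ x : Fin m → ℝ, (∀ i, 0 ≤ x i ∧ x i ≤ 1) → (∑ i, x i = μ₀) → x ∈ K := by
    intro x hx hs
    exact ⟨fun i _ => ⟨(hx i).1, (hx i).2⟩, hs⟩
  have hhK : h ∈ K := hmemK h hcube hsum
  obtain ⟨h₀, hh₀K, hmin⟩ := hKc.exists_isMinOn ⟨h, hhK⟩ hf.continuousOn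
  set M : Set (Fin m → ℝ) := K ∩ {x | f x = f h₀} with hMdef
  have hMc : IsCompact M := hKc.inter_right (isClosed_eq hf continuous_const)
  have hg : Continuous fun x : Fin m → ℝ => ∑ i, (x i)^2 :=
    continuous_finset_sum _ fun i _ => (continuous_apply i).pow 2
  obtain ⟨h₁, hh₁M, hmax⟩ := hMc.exists_isMaxOn ⟨h₀, hh₀K, rfl⟩ hg.continuousOn
  obtain ⟨⟨h₁cube, h₁sum⟩, h₁f⟩ := hh₁M
  have h₁sum' : ∑ i, h₁ i = μ₀ := h₁sum
  have h₁f' : f h₁ = f h₀ := h₁f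
  have hfrac : ∀ i j, 0 < h₁ i → h₁ i < 1 → 0 < h₁ j → h₁ j < 1 → h₁ i = h₁ j := by
    by_contra hcon
    push_neg at hcon
    obtain ⟨i, j, hi0, hi1, hj0, hj1, hne⟩ := hcon
    have hij : i ≠ j := fun hc => hne (by rw [hc])
    obtain ⟨c₀, c₁, d, hcd⟩ := hpq h₁ i j hij
    set σ := h₁ i + h₁ j with hσ
    have hself : Function.update (Function.update h₁ i (h₁ i)) j (h₁ j) = h₁ := by
      rw [Function.update_eq_self, Function.update_eq_self]
    have hfh₁ : f h₁ = c₀ + c₁ * σ + d * (h₁ i * h₁ j) := by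
      have := hcd (h₁ i) (h₁ j); rw [hself] at this; exact this
    have hval : ∀ x y : ℝ, ∀ a : Fin m,
        Function.update (Function.update h₁ i x) j y a
          = if a = j then y else if a = i then x else h₁ a := by
      intro x y a
      by_cases haj : a = j
      · subst haj; simp
      · by_cases hai : a = i
        · subst hai; simp [haj, Function.update_apply]
        · simp [haj, hai, Function.update_apply]
    have htail : ∀ x y : ℝ, ∑ a ∈ (Finset.univ.erase i).erase j,
        Function.update (Function.update h₁ i x) j y a
        = ∑ a ∈ (Finset.univ.erase i).erase j, h₁ a := by
      intro x y
      apply Finset.sum_congr rfl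
      intro a ha
      rw [Finset.mem_erase, Finset.mem_erase] at ha
      rw [hval, if_neg ha.1, if_neg ha.2.1]
    have hs₁ : h₁ i + h₁ j + ∑ a ∈ (Finset.univ.erase i).erase j, h₁ a = μ₀ := by
      rw [← sum_split2 hij h₁]; exact h₁sum'
    have hKup : ∀ x y : ℝ, 0 ≤ x → x ≤ 1 → 0 ≤ y → y ≤ 1 → x + y = σ →
        Function.update (Function.update h₁ i x) j y ∈ K := by
      intro x y hx0 hx1 hy0 hy1 hxy
      apply hmemK
      · intro a
        rw [hval]
        split_ifs with h1 h2
        · exact ⟨hy0, hy1⟩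
        · exact ⟨hx0, hx1⟩
        · exact ⟨(h₁cube a (Set.mem_univ a)).1, (h₁cube a (Set.mem_univ a)).2⟩
      · rw [sum_split2 hij, htail, hval, hval, if_pos rfl, if_neg hij, if_pos rfl]
        rw [hσ] at hxy
        linarith
    have hfup : ∀ x y : ℝ, x + y = σ →
        f (Function.update (Function.update h₁ i x) j y) = c₀ + c₁ * σ + d * (x*y) := by
      intro x y hxy
      rw [hcd x y, hxy]
    -- EQ config
    have hEQK : Function.update (Function.update h₁ i (σ/2)) j (σ/2) ∈ K := by
      apply hKup <;> [skip; skip; skip; skip; ring] <;> rw [hσ] <;> linarith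
    have hEQf : f h₁ ≤ c₀ + c₁ * σ + d * ((σ/2) * (σ/2)) := by
      rw [h₁f', ← hfup (σ/2) (σ/2) (by ring)]
      exact (isMinOn_iff.1 hmin) _ hEQK
    have h2pos : 0 < (h₁ i - h₁ j)^2 := by
      rcases lt_or_gt_of_ne (sub_ne_zero.2 hne) with hlt | hgt
      · nlinarith
      · nlinarith
    have huu : h₁ i * h₁ j < σ/2 * (σ/2) := by rw [hσ]; nlinarith [h2pos]
    have hd1 : 0 ≤ d := by
      rw [hfh₁] at hEQf
      by_contra hdneg
      push_neg at hdneg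
      have := mul_lt_mul_of_neg_left huu hdneg
      linarith
    -- EX config
    obtain ⟨x', y', hx'0, hx'1, hy'0, hy'1, hxy', hlt⟩ :
        ∃ x' y' : ℝ, 0 ≤ x' ∧ x' ≤ 1 ∧ 0 ≤ y' ∧ y' ≤ 1 ∧ x' + y' = σ ∧
          x' * y' < h₁ i * h₁ j := by
      by_cases hσ1 : σ ≤ 1
      · exact ⟨0, σ, le_refl 0, by rw [hσ] at *; linarith, by rw [hσ] at *; linarith,
          hσ1, by ring, by rw [hσ] at *; nlinarith⟩
      · exact ⟨σ - 1, 1, by rw [hσ] at *; linarith, by rw [hσ] at *; linarith,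
          zero_le_one, le_refl 1, by ring, by rw [hσ] at *; nlinarith⟩
    have hEXK := hKup x' y' hx'0 hx'1 hy'0 hy'1 hxy'
    have hEXf : f h₁ ≤ c₀ + c₁ * σ + d * (x' * y') := by
      rw [h₁f', ← hfup x' y' hxy']
      exact (isMinOn_iff.1 hmin) _ hEXK
    have hd2 : d ≤ 0 := by
      rw [hfh₁] at hEXf
      by_contra hdpos
      push_neg at hdpos
      have := mul_lt_mul_of_pos_left hlt hdpos
      linarith
    have hd : d = 0 := le_antisymm hd2 hd1
    have hEXM : Function.update (Function.update h₁ i x') j y' ∈ M := by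
      refine ⟨hEXK, ?_⟩
      show f _ = f h₀
      rw [hfup x' y' hxy', hd, ← h₁f', hfh₁, hd]
      ring
    have hgEX := (isMaxOn_iff.1 hmax) _ hEXM
    rw [sum_split2 hij (fun a => (Function.update (Function.update h₁ i x') j y' a)^2),
        sum_split2 hij (fun a => (h₁ a)^2)] at hgEX
    have htail2 : ∑ a ∈ (Finset.univ.erase i).erase j,
        (Function.update (Function.update h₁ i x') j y' a)^2
        = ∑ a ∈ (Finset.univ.erase i).erase j, (h₁ a)^2 := by
      apply Finset.sum_congr rfl
      intro a ha
      rw [Finset.mem_erase, Finset.mem_erase] at ha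
      rw [hval, if_neg ha.1, if_neg ha.2.1]
    rw [htail2, hval, hval, if_pos rfl, if_neg hij, if_pos rfl] at hgEX
    rw [hσ] at hxy'
    have hsq : (x'+y')^2 = (h₁ i + h₁ j)^2 := by rw [hxy']
    nlinarith [hlt, hsq]
  exact le_trans (hbase h₁ (fun i => ⟨(h₁cube i (Set.mem_univ i)).1, (h₁cube i (Set.mem_univ i)).2⟩)
      h₁sum' hfrac) (by rw [h₁f']; exact (isMinOn_iff.1 hmin) h hhK)

lemma pmfZ_cont (m : ℕ) (k : ℤ) : Continuous fun h : Fin m → ℝ => pmfZ m h Finset.univ k := by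
  rcases le_or_gt 0 k with hk | hk
  · simp only [pmfZ, if_pos hk]
    exact continuous_finset_sum _ fun S _ =>
      (continuous_finset_prod _ fun i _ => continuous_apply i).mul
        (continuous_finset_prod _ fun i _ => continuous_const.sub (continuous_apply i))
  · simp only [pmfZ, if_neg (not_le.2 hk)]
    exact continuous_const

lemma config_of_frac {m : ℕ} (h : Fin m → ℝ) (hcube : ∀ i, 0 ≤ h i ∧ h i ≤ 1)
    (hfrac : ∀ i j, 0 < h i → h i < 1 → 0 < h j → h j < 1 → h i = h j) :
    ∃ x : ℝ, 0 < x ∧ x < 1 ∧ ∀ i ∈ (Finset.univ : Finset (Fin m)), h i = 1 ∨ h i = 0 ∨ h i = x := by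
  by_cases hex : ∃ i, 0 < h i ∧ h i < 1
  · obtain ⟨i₀, hi₀⟩ := hex
    refine ⟨h i₀, hi₀.1, hi₀.2, ?_⟩
    intro i _
    rcases eq_or_lt_of_le (hcube i).1 with h0 | h0
    · exact Or.inr (Or.inl h0.symm)
    · rcases eq_or_lt_of_le (hcube i).2 with h1 | h1
      · exact Or.inl h1
      · exact Or.inr (Or.inr (hfrac i i₀ h0 h1 hi₀.1 hi₀.2))
  · push_neg at hex
    refine ⟨1/2, by norm_num, by norm_num, ?_⟩
    intro i _
    rcases eq_or_lt_of_le (hcube i).1 with h0 | h0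
    · exact Or.inr (Or.inl h0.symm)
    · exact Or.inl (le_antisymm (hcube i).2 (hex i h0))
lemma W_lemma {m : ℕ} (h : Fin m → ℝ) (hcube : ∀ i, 0 ≤ h i ∧ h i ≤ 1) (k : ℤ)
    (hμ : (k:ℝ) + 1 ≤ ∑ i, h i) :
    pmfZ m h Finset.univ k ≤ pmfZ m h Finset.univ (k+1) := by
  have hgen := gen_min m (fun g => pmfZ m g Finset.univ (k+1) - pmfZ m g Finset.univ k)
    ((pmfZ_cont m (k+1)).sub (pmfZ_cont m k))
    (by
      intro g i j hij
      obtain ⟨c₀, c₁, d, hcd⟩ := pmfZ_pair g hij (k+1)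
      obtain ⟨c₀', c₁', d', hcd'⟩ := pmfZ_pair g hij k
      exact ⟨c₀ - c₀', c₁ - c₁', d - d', fun x y => by simp only [hcd, hcd']; ring⟩)
    (∑ i, h i)
    (by
      intro g hg hsum hfr
      obtain ⟨x, hx0, hx1, hcfg⟩ := config_of_frac g hg hfr
      obtain ⟨hform, hsum2⟩ := config_formula g x hx0 hx1 Finset.univ hcfg
      rw [sub_nonneg, hform (k+1), hform k]
      apply binom_W hx0 hx1
      rw [← hsum2, hsum]
      exact hμ)
    h hcube rfl
  simp only [sub_nonneg] at hgen
  exact hgen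

lemma W'_lemma {m : ℕ} (h : Fin m → ℝ) (hcube : ∀ i, 0 ≤ h i ∧ h i ≤ 1) (k : ℤ)
    (hμ : (∑ i, h i) ≤ (k:ℝ)) :
    pmfZ m h Finset.univ (k+1) ≤ pmfZ m h Finset.univ k := by
  have hgen := gen_min m (fun g => pmfZ m g Finset.univ k - pmfZ m g Finset.univ (k+1))
    ((pmfZ_cont m k).sub (pmfZ_cont m (k+1)))
    (by
      intro g i j hij
      obtain ⟨c₀, c₁, d, hcd⟩ := pmfZ_pair g hij k
      obtain ⟨c₀', c₁', d', hcd'⟩ := pmfZ_pair g hij (k+1)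
      exact ⟨c₀ - c₀', c₁ - c₁', d - d', fun x y => by simp only [hcd, hcd']; ring⟩)
    (∑ i, h i)
    (by
      intro g hg hsum hfr
      obtain ⟨x, hx0, hx1, hcfg⟩ := config_of_frac g hg hfr
      obtain ⟨hform, hsum2⟩ := config_formula g x hx0 hx1 Finset.univ hcfg
      rw [sub_nonneg, hform (k+1), hform k]
      apply binom_W' hx0 hx1
      rw [← hsum2, hsum]
      exact hμ)
    h hcube rfl
  simp only [sub_nonneg] at hgen
  exact hgen

lemma pmf_eq (m : ℕ) (h : Fin m → ℝ) (ε : ℕ) :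
    poissonBinomialPMF m h ε = pmfZ m h Finset.univ (ε:ℤ) := by
  unfold poissonBinomialPMF pmfZ
  rw [if_pos (by positivity : (0:ℤ) ≤ (ε:ℤ))]
  rw [Int.toNat_natCast]
  apply Finset.sum_congr rfl
  intro S hS
  rw [Finset.compl_eq_univ_sdiff]

lemma pmfZ_big {m : ℕ} (h : Fin m → ℝ) {k : ℤ} (hk : (m:ℤ) < k) :
    pmfZ m h Finset.univ k = 0 := by
  unfold pmfZ
  rw [if_pos (by omega)]
  rw [Finset.powersetCard_eq_empty.2 (by simp [Finset.card_univ]; omega), Finset.sum_empty]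


/-- The mode of a Poisson binomial distribution is determined by its expectation
`μ = h 0 + ⋯ + h (m-1)`: some maximizer `mstar` of the PMF satisfies `|mstar - μ| ≤ 1`. -/
theorem poissonBinomial_mode_near_expectation (m : ℕ) (hm : 1 ≤ m) (h : Fin m → ℝ)
    (hh : ∀ i, 0 ≤ h i ∧ h i ≤ 1) :
    ∃ mstar : ℕ, mstar ≤ m ∧
      (∀ ε : ℕ, ε ≤ m → poissonBinomialPMF m h ε ≤ poissonBinomialPMF m h mstar) ∧
      |(mstar : ℝ) - ∑ i, h i| ≤ 1 := by
  classical
  set μ := ∑ i, h i with hμdef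
  have hμ0 : 0 ≤ μ := Finset.sum_nonneg fun i _ => (hh i).1
  have hμm : μ ≤ m := by
    calc μ ≤ ∑ _i : Fin m, (1:ℝ) := Finset.sum_le_sum fun i _ => (hh i).2
    _ = m := by simp
  set F : ℤ := ⌊μ⌋ with hF
  have hF0 : 0 ≤ F := Int.floor_nonneg.2 hμ0
  have hFμ : (F:ℝ) ≤ μ := Int.floor_le μ
  have hμF : μ < F + 1 := Int.lt_floor_add_one μ
  have hFm : F ≤ (m:ℤ) := by
    have : (F:ℝ) ≤ (m:ℝ) := hFμ.trans hμm
    exact_mod_cast this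
  set Fn : ℕ := F.toNat with hFn
  have hFnF : (Fn:ℤ) = F := Int.toNat_of_nonneg hF0
  have hFnR : ((Fn:ℕ):ℝ) = (F:ℝ) := by exact_mod_cast congrArg (fun z : ℤ => (z:ℝ)) hFnF
  have hFnm : Fn ≤ m := by omega
  have hstep : ∀ n : ℕ, n < Fn → poissonBinomialPMF m h n ≤ poissonBinomialPMF m h (n+1) := by
    intro n hn
    rw [pmf_eq, pmf_eq]
    have e : ((n+1:ℕ):ℤ) = (n:ℤ) + 1 := by push_cast; ring
    rw [e]
    apply W_lemma h hh
    have h1 : ((n:ℝ)+1) ≤ (Fn:ℝ) := by exact_mod_cast hn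
    rw [hFnR] at h1
    push_cast
    linarith
  have hstep' : ∀ n : ℕ, Fn + 1 ≤ n → poissonBinomialPMF m h (n+1) ≤ poissonBinomialPMF m h n := by
    intro n hn
    rw [pmf_eq, pmf_eq]
    have e : ((n+1:ℕ):ℤ) = (n:ℤ) + 1 := by push_cast; ring
    rw [e]
    apply W'_lemma h hh
    have h1 : ((Fn:ℝ)+1) ≤ (n:ℝ) := by exact_mod_cast hn
    rw [hFnR] at h1
    push_cast
    linarith
  have hup : ∀ d n : ℕ, n + d = Fn → poissonBinomialPMF m h n ≤ poissonBinomialPMF m h Fn := by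
    intro d
    induction d with
    | zero =>
      intro n hn
      rw [show n = Fn by omega]
    | succ d ih =>
      intro n hn
      exact le_trans (hstep n (by omega)) (ih (n+1) (by omega))
  have hdown : ∀ d n : ℕ, n = Fn + 1 + d →
      poissonBinomialPMF m h n ≤ poissonBinomialPMF m h (Fn+1) := by
    intro d
    induction d with
    | zero =>
      intro n hn
      rw [show n = Fn + 1 by omega]
    | succ d ih =>
      intro n hn
      rw [show n = (Fn + 1 + d) + 1 by omega]
      exact le_trans (hstep' (Fn+1+d) (by omega)) (ih (Fn+1+d) rfl)
  rcases le_or_gt (poissonBinomialPMF m h (Fn+1)) (poissonBinomialPMF m h Fn) with hcase | hcase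
  · refine ⟨Fn, hFnm, ?_, ?_⟩
    · intro ε hε
      rcases le_or_gt ε Fn with hεF | hεF
      · exact hup (Fn - ε) ε (by omega)
      · exact le_trans (hdown (ε - (Fn+1)) ε (by omega)) hcase
    · rw [abs_le]
      constructor
      · rw [hFnR]; linarith
      · rw [hFnR]; linarith
  · have hFn1m : Fn + 1 ≤ m := by
      by_contra hc
      push_neg at hc
      have hz : poissonBinomialPMF m h (Fn+1) = 0 := by
        rw [pmf_eq]
        exact pmfZ_big _ (by push_cast; omega)
      have hnn : 0 ≤ poissonBinomialPMF m h Fn := by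
        rw [pmf_eq]
        exact pmfZ_nonneg _ (fun i _ => hh i)
      linarith
    refine ⟨Fn+1, hFn1m, ?_, ?_⟩
    · intro ε hε
      rcases le_or_gt ε Fn with hεF | hεF
      · exact le_trans (hup (Fn - ε) ε (by omega)) (le_of_lt hcase)
      · exact hdown (ε - (Fn+1)) ε (by omega)
    · rw [abs_le]
      have e : (((Fn+1:ℕ)):ℝ) = (F:ℝ) + 1 := by
        push_cast
        rw [hFnR]
      constructor
      · rw [e]; linarith
      · rw [e]; linarith
end

section
/- Choice of interval size in the Hoeffding approximation: let m, n be integers with 1 ≤ m ≤ n, let h_0, …, h_{m−1} ∈ [0,1], let P be the corresponding Poisson binomial probability mass function with expectation μ = Σ_{i=0}^{m−1} h_i. If s > √(−ln(0.5·10⁻²)·2n) = √(2n·ln 200), then Σ over all integers ε with 0 ≤ ε ≤ m and |ε − μ| ≥ s of P(ε) is strictly less than 10⁻². -/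
lemma pmf_nonneg (m : ℕ) (h : Fin m → ℝ) (hh : ∀ i, 0 ≤ h i ∧ h i ≤ 1) (ε : ℕ) :
    0 ≤ poissonBinomialPMF m h ε := by
  refine Finset.sum_nonneg fun S _ => mul_nonneg ?_ ?_
  · exact Finset.prod_nonneg fun i _ => (hh i).1
  · exact Finset.prod_nonneg fun i _ => by linarith [(hh i).2]

lemma pmf_mgf (m : ℕ) (h : Fin m → ℝ) (y : ℝ) :
    ∑ ε ∈ Finset.range (m + 1), poissonBinomialPMF m h ε * y ^ ε
      = ∏ i, (h i * y + (1 - h i)) := by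
  rw [Fintype.prod_add (fun i => h i * y) (fun i => 1 - h i)]
  rw [show (Finset.univ : Finset (Finset (Fin m))) = (Finset.univ : Finset (Fin m)).powerset from
    Finset.powerset_univ.symm]
  rw [Finset.powerset_card_disjiUnion]
  erw [Finset.sum_disjiUnion]
  rw [Finset.card_univ, Fintype.card_fin]
  refine Finset.sum_congr rfl fun ε _ => ?_
  unfold poissonBinomialPMF
  rw [Finset.sum_mul]
  refine Finset.sum_congr rfl fun S hS => ?_
  rw [Finset.prod_mul_distrib, Finset.prod_const,
    (Finset.mem_powersetCard_univ.mp hS : S.card = ε)]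
  ring

lemma exp_neg_le_quadratic {t : ℝ} (ht : 0 ≤ t) : Real.exp (-t) ≤ 1 - t + t ^ 2 / 2 := by
  have h1 : 1 + t + t ^ 2 / 2 ≤ Real.exp t := Real.quadratic_le_exp_of_nonneg ht
  have hq : 0 ≤ 1 - t + t ^ 2 / 2 := by nlinarith [sq_nonneg (t - 1)]
  have h4 : (1 - t + t ^ 2 / 2) * (1 + t + t ^ 2 / 2) ≤ (1 - t + t ^ 2 / 2) * Real.exp t :=
    mul_le_mul_of_nonneg_left h1 hq
  have he : Real.exp (-t) * Real.exp t = 1 := by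
    rw [← Real.exp_add]; simp
  nlinarith [Real.exp_pos t, Real.exp_pos (-t), sq_nonneg (t ^ 2)]

lemma lower_tail (m n : ℕ) (hm : 1 ≤ m) (hmn : m ≤ n) (h : Fin m → ℝ)
    (hh : ∀ i, 0 ≤ h i ∧ h i ≤ 1) (s : ℝ)
    (hs : s > Real.sqrt (2 * n * Real.log 200)) :
    ∑ ε ∈ (Finset.range (m + 1)).filter (fun (ε : ℕ) => (ε : ℝ) ≤ (∑ i, h i) - s),
        poissonBinomialPMF m h ε < 1 / 200 := by
  have hlog : (0 : ℝ) < Real.log 200 := Real.log_pos (by norm_num)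
  have hn : (0 : ℝ) < n := by
    have : 1 ≤ n := le_trans hm hmn
    exact_mod_cast this
  have hpos : 0 < 2 * (n : ℝ) * Real.log 200 := by positivity
  have hs0 : 0 < s := lt_of_lt_of_le (Real.sqrt_pos.mpr hpos) hs.le
  have hs2 : 2 * (n : ℝ) * Real.log 200 < s ^ 2 := (Real.sqrt_lt' hs0).mp hs
  set t : ℝ := s / n with htdef
  have ht0 : 0 < t := div_pos hs0 hn
  set μ : ℝ := ∑ i, h i with hμdef
  have hμ0 : 0 ≤ μ := Finset.sum_nonneg fun i _ => (hh i).1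
  have hμn : μ ≤ n := by
    have h1 : μ ≤ (m : ℝ) := by
      calc μ ≤ ∑ _i : Fin m, (1 : ℝ) := Finset.sum_le_sum fun i _ => (hh i).2
        _ = m := by simp
    exact h1.trans (by exact_mod_cast hmn)
  have step1 : ∑ ε ∈ (Finset.range (m + 1)).filter (fun (ε : ℕ) => (ε : ℝ) ≤ μ - s),
      poissonBinomialPMF m h ε
      ≤ ∑ ε ∈ Finset.range (m + 1),
          poissonBinomialPMF m h ε * (Real.exp (t * (μ - s)) * Real.exp (-t) ^ ε) := by
    refine le_trans (Finset.sum_le_sum fun ε hε => ?_)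
      (Finset.sum_le_sum_of_subset_of_nonneg (Finset.filter_subset _ _) fun ε _ _ =>
        mul_nonneg (pmf_nonneg m h hh ε) (by positivity))
    obtain ⟨-, hε2⟩ := Finset.mem_filter.mp hε
    have : (1 : ℝ) ≤ Real.exp (t * (μ - s)) * Real.exp (-t) ^ ε := by
      rw [← Real.exp_nat_mul, ← Real.exp_add]
      refine Real.one_le_exp ?_
      have : t * (ε : ℝ) ≤ t * (μ - s) := mul_le_mul_of_nonneg_left hε2 ht0.le
      nlinarith
    exact le_mul_of_one_le_right (pmf_nonneg m h hh ε) this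
  have step2 : ∑ ε ∈ Finset.range (m + 1),
      poissonBinomialPMF m h ε * (Real.exp (t * (μ - s)) * Real.exp (-t) ^ ε)
      = Real.exp (t * (μ - s)) * ∏ i, (h i * Real.exp (-t) + (1 - h i)) := by
    rw [← pmf_mgf m h (Real.exp (-t)), Finset.mul_sum]
    exact Finset.sum_congr rfl fun ε _ => by ring
  have step3 : ∏ i, (h i * Real.exp (-t) + (1 - h i))
      ≤ Real.exp (μ * (Real.exp (-t) - 1)) := by
    calc ∏ i, (h i * Real.exp (-t) + (1 - h i))
        ≤ ∏ i, Real.exp (h i * (Real.exp (-t) - 1)) := by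
          refine Finset.prod_le_prod (fun i _ => ?_) (fun i _ => ?_)
          · have h1 := (hh i).1; have h2 := (hh i).2
            have := Real.exp_pos (-t)
            nlinarith
          · have := Real.add_one_le_exp (h i * (Real.exp (-t) - 1))
            nlinarith
      _ = Real.exp (∑ i, h i * (Real.exp (-t) - 1)) := (Real.exp_sum _ _).symm
      _ = Real.exp (μ * (Real.exp (-t) - 1)) := by rw [← Finset.sum_mul]
  have hquad : Real.exp (-t) - 1 ≤ -t + t ^ 2 / 2 := by
    have := exp_neg_le_quadratic ht0.le; linarith
  have hexpbound : t * (μ - s) + μ * (Real.exp (-t) - 1) ≤ -(s ^ 2) / (2 * n) := by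
    have h5 : μ * (Real.exp (-t) - 1) ≤ μ * (-t + t ^ 2 / 2) :=
      mul_le_mul_of_nonneg_left hquad hμ0
    have h6 : μ * (t ^ 2 / 2) ≤ (n : ℝ) * (t ^ 2 / 2) :=
      mul_le_mul_of_nonneg_right hμn (by positivity)
    have hne : (n : ℝ) ≠ 0 := ne_of_gt hn
    have e1 : t * (μ - s) + μ * (Real.exp (-t) - 1) ≤ -(t * s) + (n : ℝ) * (t ^ 2 / 2) := by
      linarith
    have e2 : -(t * s) + (n : ℝ) * (t ^ 2 / 2) = -(s ^ 2) / (2 * n) := by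
      rw [htdef]; field_simp; ring
    linarith
  have hfinal : -(s ^ 2) / (2 * n) < -Real.log 200 := by
    rw [div_lt_iff₀ (by positivity : (0:ℝ) < 2 * (n:ℝ))]
    nlinarith
  calc ∑ ε ∈ (Finset.range (m + 1)).filter (fun (ε : ℕ) => (ε : ℝ) ≤ μ - s),
        poissonBinomialPMF m h ε
      ≤ Real.exp (t * (μ - s)) * ∏ i, (h i * Real.exp (-t) + (1 - h i)) := by
        rw [← step2]; exact step1
    _ ≤ Real.exp (t * (μ - s)) * Real.exp (μ * (Real.exp (-t) - 1)) :=
        mul_le_mul_of_nonneg_left step3 (Real.exp_pos _).le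
    _ = Real.exp (t * (μ - s) + μ * (Real.exp (-t) - 1)) := (Real.exp_add _ _).symm
    _ < Real.exp (-Real.log 200) := Real.exp_lt_exp.mpr (lt_of_le_of_lt hexpbound hfinal)
    _ = 1 / 200 := by
        rw [Real.exp_neg, Real.exp_log (by norm_num : (0:ℝ) < 200)]; norm_num

lemma pmf_flip (m : ℕ) (h : Fin m → ℝ) (ε : ℕ) (hε : ε ≤ m) :
    poissonBinomialPMF m h ε = poissonBinomialPMF m (fun i => 1 - h i) (m - ε) := by
  unfold poissonBinomialPMF
  refine Finset.sum_nbij' (fun S => Sᶜ) (fun S => Sᶜ) ?_ ?_ ?_ ?_ ?_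
  · intro S hS
    rw [Finset.mem_powersetCard_univ] at *
    rw [Finset.card_compl, Fintype.card_fin, hS]
  · intro S hS
    rw [Finset.mem_powersetCard_univ] at *
    rw [Finset.card_compl, Fintype.card_fin, hS]
    omega
  · intro S _; exact compl_compl S
  · intro S _; exact compl_compl S
  · intro S _
    rw [compl_compl]
    rw [Finset.prod_congr rfl (fun i _ => (sub_sub_cancel 1 (h i)))]
    ring

/-- Choice of interval size in the Hoeffding approximation: if
`s > √(-ln(0.5·10⁻²)·2n) = √(2n·ln 200)`, then the probability mass outside the
interval of radius `s` around the expectation is less than `10⁻²`. -/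
theorem poissonBinomial_hoeffding_choice (m n : ℕ) (hm : 1 ≤ m) (hmn : m ≤ n)
    (h : Fin m → ℝ) (hh : ∀ i, 0 ≤ h i ∧ h i ≤ 1) (s : ℝ)
    (hs : s > Real.sqrt (2 * n * Real.log 200)) :
    ∑ ε ∈ (Finset.range (m + 1)).filter (fun (ε : ℕ) => s ≤ |(ε : ℝ) - ∑ i, h i|),
        poissonBinomialPMF m h ε < 10 ^ (-2 : ℤ) := by
  have hlog : (0 : ℝ) < Real.log 200 := Real.log_pos (by norm_num)
  have hn : (0 : ℝ) < n := by
    have : 1 ≤ n := le_trans hm hmn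
    exact_mod_cast this
  have hpos : 0 < 2 * (n : ℝ) * Real.log 200 := by positivity
  have hs0 : 0 < s := lt_of_lt_of_le (Real.sqrt_pos.mpr hpos) hs.le
  have hiff : ∀ ε ∈ Finset.range (m + 1),
      (s ≤ |(ε : ℝ) - ∑ i, h i|) ↔
        ((ε : ℝ) ≤ (∑ i, h i) - s ∨ (∑ i, h i) + s ≤ (ε : ℝ)) := by
    intro ε _
    rw [le_abs]
    constructor
    · rintro (h1 | h1)
      · right; linarith
      · left; linarith
    · rintro (h1 | h1)
      · right; linarith
      · left; linarith
  rw [Finset.filter_congr hiff, Finset.filter_or]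
  have hdisj : Disjoint
      ((Finset.range (m + 1)).filter (fun (ε : ℕ) => (ε : ℝ) ≤ (∑ i, h i) - s))
      ((Finset.range (m + 1)).filter (fun (ε : ℕ) => (∑ i, h i) + s ≤ (ε : ℝ))) := by
    rw [Finset.disjoint_left]
    intro a ha hb
    rw [Finset.mem_filter] at ha hb
    linarith [ha.2, hb.2]
  rw [Finset.sum_union hdisj]
  have hA := lower_tail m n hm hmn h hh s hs
  have hh' : ∀ i, 0 ≤ 1 - h i ∧ 1 - h i ≤ 1 := fun i => ⟨by linarith [(hh i).2], by linarith [(hh i).1]⟩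
  have hB : ∑ ε ∈ (Finset.range (m + 1)).filter (fun (ε : ℕ) => (∑ i, h i) + s ≤ (ε : ℝ)),
      poissonBinomialPMF m h ε < 1 / 200 := by
    have hsum' : ∑ i, (1 - h i) = (m : ℝ) - ∑ i, h i := by
      rw [Finset.sum_sub_distrib]; simp
    have hflip : ∀ ε ∈ (Finset.range (m + 1)).filter (fun (ε : ℕ) => (∑ i, h i) + s ≤ (ε : ℝ)),
        poissonBinomialPMF m h ε = poissonBinomialPMF m (fun i => 1 - h i) (m - ε) := by
      intro ε hε
      exact pmf_flip m h ε (by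
        have := Finset.mem_range.mp (Finset.mem_filter.mp hε).1; omega)
    have hinj : ∀ a ∈ (Finset.range (m + 1)).filter
        (fun (ε : ℕ) => (∑ i, h i) + s ≤ (ε : ℝ)), ∀ b ∈ (Finset.range (m + 1)).filter
        (fun (ε : ℕ) => (∑ i, h i) + s ≤ (ε : ℝ)), m - a = m - b → a = b := by
      intro a ha b hb hab
      have ha' := Finset.mem_range.mp (Finset.mem_filter.mp ha).1
      have hb' := Finset.mem_range.mp (Finset.mem_filter.mp hb).1
      omega
    have heq := Finset.sum_image (s := (Finset.range (m + 1)).filter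
        (fun (ε : ℕ) => (∑ i, h i) + s ≤ (ε : ℝ)))
      (f := poissonBinomialPMF m (fun i => 1 - h i)) (g := fun ε => m - ε) hinj
    rw [Finset.sum_congr rfl hflip, ← heq]
    refine lt_of_le_of_lt (Finset.sum_le_sum_of_subset_of_nonneg ?_
      (fun ε _ _ => pmf_nonneg m _ hh' ε)) (lower_tail m n hm hmn _ hh' s hs)
    intro ε' hε'
    obtain ⟨ε, hε, rfl⟩ := Finset.mem_image.mp hε'
    obtain ⟨hε1, hε2⟩ := Finset.mem_filter.mp hε
    have hεm : ε ≤ m := by have := Finset.mem_range.mp hε1; omega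
    rw [Finset.mem_filter, Finset.mem_range]
    refine ⟨by omega, ?_⟩
    rw [hsum', Nat.cast_sub hεm]
    have : (ε : ℝ) ≤ m := by exact_mod_cast hεm
    linarith
  have : (10 : ℝ) ^ (-2 : ℤ) = 1 / 200 + 1 / 200 := by norm_num
  rw [this]
  exact add_lt_add hA hB
end
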